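/- For all x₁, x₂ in the alternating group A_5, at least one of the following holds: x₁^10 = 1, x₂^10 = 1, x₁ = x₂, (x₁x₂)^10 = 1, or (x₁²x₂)² = 1. -/
import Mathlib

set_option maxRecDepth 100000 in
set_option maxHeartbeats 1000000 in
private lemma aux1 : ∀ x : alternatingGroup (Fin 5), x ^ 10 = 1 ∨ x ^ 3 = 1 := by
  decide

set_option maxRecDepth 100000 in
set_option maxHeartbeats 1000000 in
private lemma aux2 : ∀ x y : alternatingGroup (Fin 5),
    x ^ 3 = 1 → x ≠ 1 → y ^ 3 = 1 → y ≠ 1 → (x * y) ^ 3 = 1 → x * y ≠ 1 → x = y ∨ (x ^ 2 * y) ^ 2 = 1 := by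
  decide

theorem stmt_8 (x₁ x₂ : alternatingGroup (Fin 5)) :
    x₁ ^ 10 = 1 ∨ x₂ ^ 10 = 1 ∨ x₁ = x₂ ∨ (x₁ * x₂) ^ 10 = 1 ∨
      (x₁ ^ 2 * x₂) ^ 2 = 1 := by
  by_cases h1 : x₁ ^ 10 = 1
  · exact Or.inl h1
  by_cases h2 : x₂ ^ 10 = 1
  · exact Or.inr (Or.inl h2)
  by_cases h3 : (x₁ * x₂) ^ 10 = 1
  · exact Or.inr (Or.inr (Or.inr (Or.inl h3)))
  have e1 := (aux1 x₁).resolve_left h1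
  have e2 := (aux1 x₂).resolve_left h2
  have e3 := (aux1 (x₁ * x₂)).resolve_left h3
  have n1 : x₁ ≠ 1 := fun h => h1 (by simp [h])
  have n2 : x₂ ≠ 1 := fun h => h2 (by simp [h])
  have n3 : x₁ * x₂ ≠ 1 := fun h => h3 (by simp [h])
  rcases aux2 x₁ x₂ e1 n1 e2 n2 e3 n3 with h | h
  · exact Or.inr (Or.inr (Or.inl h))
  · exact Or.inr (Or.inr (Or.inr (Or.inr h)))
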